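/- arXiv:2209.14688 — 4 statements merged into one kernel-verified Lean document; each statement's English description precedes it below -/
import Mathlib

section
/- For every T-model 𝔠 = ⟨S, σ_V⟩, every n ∈ ℕ, and every formula φ ∈ L_n, the semantics of φ in 𝔠 factors through the terminal sequence: ‖φ‖_𝔠 = ‖φ‖_n ∘ σ_n (as functions S → A). -/
open CategoryTheory

/-- A commutative integral FL-algebra (residuated lattice): a bounded lattice with a
commutative monoid operation `*` whose unit `1` is the top element, together with a
residuated implication `himp` satisfying `a * b ≤ c ↔ b ≤ himp a c`. -/
class FLAlgebra (A : Type) extends Lattice A, BoundedOrder A, CommMonoid A where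
  himp : A → A → A
  residuation : ∀ a b c : A, a * b ≤ c ↔ b ≤ himp a c
  one_eq_top : (1 : A) = ⊤

/-- A (unary) predicate lifting for a `Set`-endofunctor `T` with truth values in `A`:
a natural transformation `Hom(-,A) ⇒ Hom(T(-),A)` where `Hom(-,A)` is the contravariant
hom-functor into `A`. -/
structure PredLifting (T : Type ⥤ Type) (A : Type) where
  app : ∀ S : Type, (S → A) → T.obj S → A
  naturality : ∀ {S S' : Type} (f : S → S') (X : S' → A),
    app S' X ∘ ⇑(T.map (TypeCat.ofHom f)) = app S (X ∘ f)

/-- The functor `T_P = EV_P × T`, where `EV_P` is the constant functor with value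
`Hom(P,A)`. -/
def TP (P A : Type) (T : Type ⥤ Type) : Type ⥤ Type where
  obj S := (P → A) × T.obj S
  map f := TypeCat.ofHom (fun x => (x.1, T.map f x.2))
  map_id X := by ext x <;> simp
  map_comp f g := by ext x <;> simp

/-- Formulas of the many-valued coalgebraic modal language `ML`: constants `c̄` (`const`),
nullary modalities `◻_{λ^p}` (`prop`), binary connectives `∨, ∧, &, →`
(`or`, `and`, `conj`, `imp`), and unary modalities `◻_λ` (`box`), where `Λ` indexes
the predicate liftings. -/
inductive MLFormula (P A Λ : Type) : Type where
  | const : A → MLFormula P A Λ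
  | prop : P → MLFormula P A Λ
  | or : MLFormula P A Λ → MLFormula P A Λ → MLFormula P A Λ
  | and : MLFormula P A Λ → MLFormula P A Λ → MLFormula P A Λ
  | conj : MLFormula P A Λ → MLFormula P A Λ → MLFormula P A Λ
  | imp : MLFormula P A Λ → MLFormula P A Λ → MLFormula P A Λ
  | box : Λ → MLFormula P A Λ → MLFormula P A Λ

namespace MLFormula

/-- The modal rank of a formula: maximal nesting depth of unary modalities `◻_λ`.
`L_n` is the set of formulas of rank ≤ n. -/
def rank {P A Λ : Type} : MLFormula P A Λ → ℕ
  | const _ => 0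
  | prop _ => 0
  | or φ ψ => max (rank φ) (rank ψ)
  | and φ ψ => max (rank φ) (rank ψ)
  | conj φ ψ => max (rank φ) (rank ψ)
  | imp φ ψ => max (rank φ) (rank ψ)
  | box _ φ => rank φ + 1

/-- Application of a substitution `ρ : P → ML`, uniformly replacing each nullary
modality `◻_{λ^p}` by `ρ p`. -/
def subst {P A Λ : Type} (ρ : P → MLFormula P A Λ) : MLFormula P A Λ → MLFormula P A Λ
  | const c => const c
  | prop p => ρ p
  | or φ ψ => or (subst ρ φ) (subst ρ ψ)
  | and φ ψ => and (subst ρ φ) (subst ρ ψ)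
  | conj φ ψ => conj (subst ρ φ) (subst ρ ψ)
  | imp φ ψ => imp (subst ρ φ) (subst ρ ψ)
  | box l φ => box l (subst ρ φ)

end MLFormula

/-- A `T`-model: a `T_P`-coalgebra `⟨S, σ_V⟩` where `σ_V s = (V s, σ s)` for a valuation
`V : S → Hom(P,A)` and a `T`-coalgebra `σ : S → T S`. -/
structure TModel (T : Type ⥤ Type) (P A : Type) where
  S : Type
  V : S → P → A
  σ : S → T.obj S

variable {T : Type ⥤ Type} {P A Λ : Type}

/-- The semantics `‖φ‖_𝔠 : S → A` of a formula in a `T`-model, given an assignment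
`lift` of predicate liftings to the modality indices in `Λ`. -/
def sem [FLAlgebra A] (lift : Λ → PredLifting T A) (M : TModel T P A) :
    MLFormula P A Λ → M.S → A
  | .const c, _ => c
  | .prop p, s => M.V s p
  | .or φ ψ, s => sem lift M φ s ⊔ sem lift M ψ s
  | .and φ ψ, s => sem lift M φ s ⊓ sem lift M ψ s
  | .conj φ ψ, s => sem lift M φ s * sem lift M ψ s
  | .imp φ ψ, s => FLAlgebra.himp (sem lift M φ s) (sem lift M ψ s)
  | .box l φ, s => (lift l).app M.S (sem lift M φ) (M.σ s)

/-- The (pseudo-)terminal sequence: `T_P^0 1̃ = 1̃ = Hom(P,A) × 1` and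
`T_P^{n+1} 1̃ = T_P (T_P^n 1̃)`. -/
def TPn (P A : Type) (T : Type ⥤ Type) : ℕ → Type :=
  Nat.rec ((P → A) × PUnit) (fun _ ih => (P → A) × T.obj ih)

/-- `T_P^{n+1} 1̃` is (definitionally) `T_P` applied to `T_P^n 1̃`. -/
theorem TPn_succ (P A : Type) (T : Type ⥤ Type) (n : ℕ) :
    TPn P A T (n+1) = (TP P A T).obj (TPn P A T n) := rfl

/-- Every element of `T_P^n 1̃` has the form `⟨ν, δ⟩`; this extracts `ν : Hom(P,A)`. -/
def projV (P A : Type) (T : Type ⥤ Type) : (n : ℕ) → TPn P A T n → (P → A)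
  | 0 => fun t => t.1
  | _+1 => fun t => t.1

/-- The `n`-step semantics `‖φ‖_n : T_P^n 1̃ → A` (well-behaved for `rank φ ≤ n`;
the value of a box at level `0` is junk `1`). -/
def stepSem [FLAlgebra A] (lift : Λ → PredLifting T A) :
    MLFormula P A Λ → (n : ℕ) → TPn P A T n → A
  | .const c, _, _ => c
  | .prop p, n, t => projV P A T n t p
  | .or φ ψ, n, t => stepSem lift φ n t ⊔ stepSem lift ψ n t
  | .and φ ψ, n, t => stepSem lift φ n t ⊓ stepSem lift ψ n t
  | .conj φ ψ, n, t => stepSem lift φ n t * stepSem lift ψ n t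
  | .imp φ ψ, n, t => FLAlgebra.himp (stepSem lift φ n t) (stepSem lift ψ n t)
  | .box l φ, n, t =>
    (match (motive := (k : ℕ) → TPn P A T k → A) n with
      | 0 => fun _ => 1
      | m+1 => fun t => (lift l).app (TPn P A T m) (fun u => stepSem lift φ m u) t.2) t

/-- The maps `σ_k : S → T_P^k 1̃`: `σ_0 s = ⟨V s, •⟩` and `σ_{k+1} = T_P σ_k ∘ σ_V`. -/
def sigmaN (M : TModel T P A) : (k : ℕ) → M.S → TPn P A T k
  | 0 => fun s => (M.V s, PUnit.unit)
  | k+1 => fun s => (TP P A T).map (TypeCat.ofHom (sigmaN M k)) (M.V s, M.σ s)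

/-- The canonical map `!'_{T_P^m 1̃} : T_P^m 1̃ → 1̃`, `⟨ν, δ⟩ ↦ ⟨ν, •⟩`. -/
def bangTilde (P A : Type) (T : Type ⥤ Type) : (m : ℕ) → TPn P A T m → TPn P A T 0
  | 0 => fun t => (t.1, PUnit.unit)
  | _+1 => fun t => (t.1, PUnit.unit)

/-- `ι^n := T_P^n ι^0 : T_P^n 1̃ → T_P^{n+1} 1̃`, for a given `ι^0 : 1̃ → T_P 1̃`. -/
def iotaN (P A : Type) (T : Type ⥤ Type) (ι0 : TPn P A T 0 → TPn P A T 1) :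
    (n : ℕ) → TPn P A T n → TPn P A T (n+1)
  | 0 => ι0
  | n+1 => ⇑((TP P A T).map (TypeCat.ofHom (iotaN P A T ι0 n)))

/-- `ι^n_k : T_P^n 1̃ → T_P^k 1̃`: `ι^n_0 ⟨ν,δ⟩ = ⟨ν,•⟩` and
`ι^n_{k+1} = T_P ι^n_k ∘ ι^n`. -/
def iotaNK (P A : Type) (T : Type ⥤ Type) (ι0 : TPn P A T 0 → TPn P A T 1) (n : ℕ) :
    (k : ℕ) → TPn P A T n → TPn P A T k
  | 0 => bangTilde P A T n
  | k+1 => ⇑((TP P A T).map (TypeCat.ofHom (iotaNK P A T ι0 n k))) ∘ iotaN P A T ι0 n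

/-- `T_P^k (!'_{T_P^m 1̃}) : T_P^{m+k} 1̃ → T_P^k 1̃`: the `k`-fold application of the
functor `T_P` to the canonical map `!'_{T_P^m 1̃} : T_P^m 1̃ → 1̃`. -/
def liftedBang (P A : Type) (T : Type ⥤ Type) (m : ℕ) :
    (k : ℕ) → TPn P A T (m + k) → TPn P A T k
  | 0 => bangTilde P A T m
  | k+1 => ⇑((TP P A T).map (TypeCat.ofHom (liftedBang P A T m k)))

/-- The `T`-model `⟨T_P^n 1̃, ι^n⟩`. -/
def terminalModel (P A : Type) (T : Type ⥤ Type) (ι0 : TPn P A T 0 → TPn P A T 1)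
    (n : ℕ) : TModel T P A where
  S := TPn P A T n
  V t := (iotaN P A T ι0 n t).1
  σ t := (iotaN P A T ι0 n t).2

/-- Semantic consequence `Γ ⊩ φ` over all `T`-models. -/
def SemConseq [FLAlgebra A] (lift : Λ → PredLifting T A)
    (Γ : Set (MLFormula P A Λ)) (φ : MLFormula P A Λ) : Prop :=
  ∀ (M : TModel T P A) (s : M.S), (∀ γ ∈ Γ, sem lift M γ s = 1) → sem lift M φ s = 1

/-- Step-`n` semantic consequence `Γ ⊩_n φ` over the terminal sequence. -/
def StepConseq [FLAlgebra A] (lift : Λ → PredLifting T A) (n : ℕ)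
    (Γ : Set (MLFormula P A Λ)) (φ : MLFormula P A Λ) : Prop :=
  ∀ t : TPn P A T n, (∀ γ ∈ Γ, stepSem lift γ n t = 1) → stepSem lift φ n t = 1

/-- Image of a finite set of formulas under a map (with classical decidable equality). -/
noncomputable def fimg {α β : Type} (f : α → β) (s : Finset α) : Finset β :=
  @Finset.image _ _ (Classical.decEq β) f s

/-- The general consequence relation `L`: the least set of consecutions containing
`Ax(𝔸)`, all substitution instances of `Ax(Λ)`, and closed under the monotonicity
rule `Γ ⊢ φ ⟹ ◻_λΓ ⊢ ◻_λφ`. -/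
inductive GenL (AxA AxL : Finset (MLFormula P A Λ) → MLFormula P A Λ → Prop) :
    Finset (MLFormula P A Λ) → MLFormula P A Λ → Prop where
  | axA {Γ φ} : AxA Γ φ → GenL AxA AxL Γ φ
  | axL {Γ φ} (ρ : P → MLFormula P A Λ) : AxL Γ φ →
      GenL AxA AxL (fimg (MLFormula.subst ρ) Γ) (MLFormula.subst ρ φ)
  | mono {Γ φ} (l : Λ) : GenL AxA AxL Γ φ →
      GenL AxA AxL (fimg (MLFormula.box l) Γ) (MLFormula.box l φ)

/-- The step-`n` consequence relations `L_n`: `L_0` is `Ax(𝔸)`-derivability restricted to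
rank-0 consecutions; `L_{n+1}` is the least set of consecutions among `L_{n+1}`-formulas
containing `Ax(𝔸)`-derivations, `n`-substitution instances of `Ax(Λ)`, and closed under
`Γ ⊢_{L_n} φ ⟹ ◻_λΓ ⊢_{L_{n+1}} ◻_λφ`. -/
inductive StepL (AxA AxL : Finset (MLFormula P A Λ) → MLFormula P A Λ → Prop) :
    ℕ → Finset (MLFormula P A Λ) → MLFormula P A Λ → Prop where
  | axA {n Γ φ} : (∀ γ ∈ Γ, MLFormula.rank γ ≤ n) → MLFormula.rank φ ≤ n →
      AxA Γ φ → StepL AxA AxL n Γ φ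
  | axL {n Γ φ} (ρ : P → MLFormula P A Λ) : (∀ p, MLFormula.rank (ρ p) ≤ n) →
      AxL Γ φ →
      StepL AxA AxL (n+1) (fimg (MLFormula.subst ρ) Γ) (MLFormula.subst ρ φ)
  | mono {n Γ φ} (l : Λ) : StepL AxA AxL n Γ φ →
      StepL AxA AxL (n+1) (fimg (MLFormula.box l) Γ) (MLFormula.box l φ)

/-- The `α`-cut of an `A`-valued fuzzy subset `f : X → A`. -/
def alphaCut {A : Type} [FLAlgebra A] {X : Type} (f : X → A) (α : A) : Set X :=
  {x | α ≤ f x}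

/-- `F ⊑_α G` for families of `A`-valued fuzzy subsets of the same universe. -/
def famLe {A : Type} [FLAlgebra A] {X : Type} (F G : Set (X → A)) (α : A) : Prop :=
  (⋂ f ∈ F, alphaCut f α) ⊆ ⋃ g ∈ G, alphaCut g α

/-- A predicate lifting is `α`-preserving if it preserves `⊑_α` between families of
fuzzy subsets. -/
def preservesAt [FLAlgebra A] (lam : PredLifting T A) (α : A) : Prop :=
  ∀ (S : Type) (F G : Set (S → A)), famLe F G α →
    famLe ((fun f => lam.app S f) '' F) ((fun f => lam.app S f) '' G) α

/-- `⊢_{L_n}` is sound w.r.t. `⊩_n`: for finite `Γ ∪ {φ} ⊆ L_n`, `Γ ⊢_{L_n} φ`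
implies `Γ ⊩_n φ`. -/
def SoundAt [FLAlgebra A] (lift : Λ → PredLifting T A)
    (AxA AxL : Finset (MLFormula P A Λ) → MLFormula P A Λ → Prop) (n : ℕ) : Prop :=
  ∀ (Γ : Finset (MLFormula P A Λ)) (φ : MLFormula P A Λ),
    (∀ γ ∈ Γ, MLFormula.rank γ ≤ n) → MLFormula.rank φ ≤ n →
    StepL AxA AxL n Γ φ → StepConseq lift n ↑Γ φ

/-- `⊢_{L_n}` is complete w.r.t. `⊩_n`: for finite `Γ ∪ {φ} ⊆ L_n`, `Γ ⊩_n φ`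
implies `Γ ⊢_{L_n} φ`. -/
def CompleteAt [FLAlgebra A] (lift : Λ → PredLifting T A)
    (AxA AxL : Finset (MLFormula P A Λ) → MLFormula P A Λ → Prop) (n : ℕ) : Prop :=
  ∀ (Γ : Finset (MLFormula P A Λ)) (φ : MLFormula P A Λ),
    (∀ γ ∈ Γ, MLFormula.rank γ ≤ n) → MLFormula.rank φ ≤ n →
    StepConseq lift n ↑Γ φ → StepL AxA AxL n Γ φ

/-- `⊢_L` is one-step sound: for every `n > 0`, soundness of `⊢_{L_{n-1}}` w.r.t.
`⊩_{n-1}` implies soundness of `⊢_{L_n}` w.r.t. `⊩_n`. -/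
def OneStepSound [FLAlgebra A] (lift : Λ → PredLifting T A)
    (AxA AxL : Finset (MLFormula P A Λ) → MLFormula P A Λ → Prop) : Prop :=
  ∀ n : ℕ, SoundAt lift AxA AxL n → SoundAt lift AxA AxL (n+1)

/-- `⊢_L` is one-step complete: for every `n > 0`, completeness of `⊢_{L_{n-1}}` w.r.t.
`⊩_{n-1}` implies completeness of `⊢_{L_n}` w.r.t. `⊩_n`. -/
def OneStepComplete [FLAlgebra A] (lift : Λ → PredLifting T A)
    (AxA AxL : Finset (MLFormula P A Λ) → MLFormula P A Λ → Prop) : Prop :=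
  ∀ n : ℕ, CompleteAt lift AxA AxL n → CompleteAt lift AxA AxL (n+1)

/-- For every `T`-model `𝔠 = ⟨S, σ_V⟩`, every `n ∈ ℕ`, and every formula
`φ ∈ L_n`, the semantics of `φ` in `𝔠` factors through the terminal sequence:
`‖φ‖_𝔠 = ‖φ‖_n ∘ σ_n` as functions `S → A`. -/
theorem sem_eq_stepSem_comp_sigmaN
    {T : Type ⥤ Type} {P A Λ : Type} [FLAlgebra A]
    (lift : Λ → PredLifting T A)
    (hT : ∃ S : Type, Nonempty (T.obj S))
    (M : TModel T P A) (n : ℕ) (φ : MLFormula P A Λ) (hφ : φ.rank ≤ n) :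
    sem lift M φ = stepSem lift φ n ∘ sigmaN M n := by
  induction φ generalizing n with
  | const c => rfl
  | prop p =>
    funext s
    cases n <;> rfl
  | or φ ψ ihφ ihψ =>
    have h := max_le_iff.mp hφ
    funext s
    simp only [sem, stepSem, Function.comp_apply, ihφ n h.1, ihψ n h.2]
  | and φ ψ ihφ ihψ =>
    have h := max_le_iff.mp hφ
    funext s
    simp only [sem, stepSem, Function.comp_apply, ihφ n h.1, ihψ n h.2]
  | conj φ ψ ihφ ihψ =>
    have h := max_le_iff.mp hφ
    funext s
    simp only [sem, stepSem, Function.comp_apply, ihφ n h.1, ihψ n h.2]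
  | imp φ ψ ihφ ihψ =>
    have h := max_le_iff.mp hφ
    funext s
    simp only [sem, stepSem, Function.comp_apply, ihφ n h.1, ihψ n h.2]
  | box l φ ih =>
    obtain ⟨m, rfl⟩ : ∃ m, n = m + 1 := by
      cases n with
      | zero => exact absurd hφ (by simp [MLFormula.rank])
      | succ m => exact ⟨m, rfl⟩
    have hm : φ.rank ≤ m := Nat.succ_le_succ_iff.mp hφ
    funext s
    show (lift l).app M.S (sem lift M φ) (M.σ s) = _
    have hnat := congrFun ((lift l).naturality (sigmaN M m)
      (fun u => stepSem lift φ m u)) (M.σ s)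
    simp only [Function.comp_apply] at hnat
    have : (fun u => stepSem lift φ m u) ∘ sigmaN M m = sem lift M φ := (ih m hm).symm
    rw [← this]
    exact hnat.symm
end

section
/- For every n ∈ ℕ and φ ∈ L_n: φ is valid in all T-models (⊩ φ) if and only if φ is step-n valid (⊩_n φ), i.e. ‖φ‖_𝔠(s)=1 for every T-model 𝔠=⟨S,σ_V⟩ and s∈S iff ‖φ‖_n(t)=1 for every t ∈ T_P^n 1̃. -/
open CategoryTheory

variable {T : Type ⥤ Type} {P A Λ : Type}

section Aux

variable {T : Type ⥤ Type} {P A Λ : Type} [FLAlgebra A]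

/-- `stepSem` along `sigmaN` computes `sem`. -/
lemma stepSem_sigmaN (lift : Λ → PredLifting T A) (M : TModel T P A)
    (φ : MLFormula P A Λ) : ∀ (n : ℕ), φ.rank ≤ n → ∀ s : M.S,
    stepSem lift φ n (sigmaN M n s) = sem lift M φ s := by
  induction φ with
  | const c => intro n _ s; rfl
  | prop p =>
    intro n _ s
    cases n with
    | zero => rfl
    | succ m => rfl
  | or φ ψ ihφ ihψ =>
    intro n hn s
    simp only [MLFormula.rank, max_le_iff] at hn
    simp only [stepSem, sem, ihφ n hn.1 s, ihψ n hn.2 s]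
  | and φ ψ ihφ ihψ =>
    intro n hn s
    simp only [MLFormula.rank, max_le_iff] at hn
    simp only [stepSem, sem, ihφ n hn.1 s, ihψ n hn.2 s]
  | conj φ ψ ihφ ihψ =>
    intro n hn s
    simp only [MLFormula.rank, max_le_iff] at hn
    simp only [stepSem, sem, ihφ n hn.1 s, ihψ n hn.2 s]
  | imp φ ψ ihφ ihψ =>
    intro n hn s
    simp only [MLFormula.rank, max_le_iff] at hn
    simp only [stepSem, sem, ihφ n hn.1 s, ihψ n hn.2 s]
  | box l φ ih =>
    intro n hn s
    cases n with
    | zero => exact absurd hn (by simp [MLFormula.rank])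
    | succ m =>
      have hm : φ.rank ≤ m := Nat.succ_le_succ_iff.mp hn
      have hnat := congrFun ((lift l).naturality (sigmaN M m) (fun u => stepSem lift φ m u)) (M.σ s)
      show (lift l).app (TPn P A T m) (fun u => stepSem lift φ m u)
          (T.map (TypeCat.ofHom (sigmaN M m)) (M.σ s)) = _
      rw [show (lift l).app (TPn P A T m) (fun u => stepSem lift φ m u)
          (T.map (TypeCat.ofHom (sigmaN M m)) (M.σ s))
          = (lift l).app M.S ((fun u => stepSem lift φ m u) ∘ sigmaN M m) (M.σ s) from hnat]
      show (lift l).app M.S (fun u => stepSem lift φ m (sigmaN M m u)) (M.σ s) = _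
      have : (fun u => stepSem lift φ m (sigmaN M m u)) = sem lift M φ := by
        funext u; exact ih m hm u
      rw [this]; rfl

/-- `stepSem` is invariant under the `iotaN` embeddings. -/
lemma stepSem_iotaN (lift : Λ → PredLifting T A)
    (ι0 : TPn P A T 0 → TPn P A T 1) (hι0 : ∀ t, (ι0 t).1 = t.1)
    (φ : MLFormula P A Λ) : ∀ (k : ℕ), φ.rank ≤ k → ∀ t : TPn P A T k,
    stepSem lift φ (k+1) (iotaN P A T ι0 k t) = stepSem lift φ k t := by
  induction φ with
  | const c => intro k _ t; rfl
  | prop p =>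
    intro k _ t
    cases k with
    | zero =>
      show (ι0 t).1 p = t.1 p
      rw [hι0 t]
    | succ m => rfl
  | or φ ψ ihφ ihψ =>
    intro k hk t
    simp only [MLFormula.rank, max_le_iff] at hk
    simp only [stepSem, ihφ k hk.1 t, ihψ k hk.2 t]
  | and φ ψ ihφ ihψ =>
    intro k hk t
    simp only [MLFormula.rank, max_le_iff] at hk
    simp only [stepSem, ihφ k hk.1 t, ihψ k hk.2 t]
  | conj φ ψ ihφ ihψ =>
    intro k hk t
    simp only [MLFormula.rank, max_le_iff] at hk
    simp only [stepSem, ihφ k hk.1 t, ihψ k hk.2 t]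
  | imp φ ψ ihφ ihψ =>
    intro k hk t
    simp only [MLFormula.rank, max_le_iff] at hk
    simp only [stepSem, ihφ k hk.1 t, ihψ k hk.2 t]
  | box l φ ih =>
    intro k hk t
    cases k with
    | zero => exact absurd hk (by simp [MLFormula.rank])
    | succ m =>
      have hm : φ.rank ≤ m := Nat.succ_le_succ_iff.mp hk
      have hnat := congrFun ((lift l).naturality (iotaN P A T ι0 m)
        (fun u => stepSem lift φ (m+1) u)) t.2
      show (lift l).app (TPn P A T (m+1)) (fun u => stepSem lift φ (m+1) u)
          (T.map (TypeCat.ofHom (iotaN P A T ι0 m)) t.2) = _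
      rw [show (lift l).app (TPn P A T (m+1)) (fun u => stepSem lift φ (m+1) u)
          (T.map (TypeCat.ofHom (iotaN P A T ι0 m)) t.2)
          = (lift l).app (TPn P A T m)
              ((fun u => stepSem lift φ (m+1) u) ∘ iotaN P A T ι0 m) t.2 from hnat]
      show (lift l).app (TPn P A T m)
          (fun u => stepSem lift φ (m+1) (iotaN P A T ι0 m u)) t.2 = _
      have : (fun u => stepSem lift φ (m+1) (iotaN P A T ι0 m u))
          = (fun u => stepSem lift φ m u) := by
        funext u; exact ih m hm u
      rw [this]; rfl

/-- Semantics in the terminal model at level `n` agrees with step-`n` semantics. -/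
lemma sem_terminalModel (lift : Λ → PredLifting T A)
    (ι0 : TPn P A T 0 → TPn P A T 1) (hι0 : ∀ t, (ι0 t).1 = t.1)
    (φ : MLFormula P A Λ) : ∀ (n : ℕ), φ.rank ≤ n →
    ∀ t : TPn P A T n, sem lift (terminalModel P A T ι0 n) φ t = stepSem lift φ n t := by
  induction φ with
  | const c => intro n _ t; rfl
  | prop p =>
    intro n _ t
    cases n with
    | zero =>
      show (ι0 t).1 p = t.1 p
      rw [hι0 t]
    | succ m => rfl
  | or φ ψ ihφ ihψ =>
    intro n hn t
    simp only [MLFormula.rank, max_le_iff] at hn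
    simp only [stepSem, sem, ihφ n hn.1 t, ihψ n hn.2 t]
  | and φ ψ ihφ ihψ =>
    intro n hn t
    simp only [MLFormula.rank, max_le_iff] at hn
    simp only [stepSem, sem, ihφ n hn.1 t, ihψ n hn.2 t]
  | conj φ ψ ihφ ihψ =>
    intro n hn t
    simp only [MLFormula.rank, max_le_iff] at hn
    simp only [stepSem, sem, ihφ n hn.1 t, ihψ n hn.2 t]
  | imp φ ψ ihφ ihψ =>
    intro n hn t
    simp only [MLFormula.rank, max_le_iff] at hn
    simp only [stepSem, sem, ihφ n hn.1 t, ihψ n hn.2 t]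
  | box l φ ih =>
    intro n hn t
    cases n with
    | zero => exact absurd hn (by simp [MLFormula.rank])
    | succ m =>
      have hm : φ.rank ≤ m := Nat.succ_le_succ_iff.mp hn
      have hnat := congrFun ((lift l).naturality (iotaN P A T ι0 m)
        (fun u => sem lift (terminalModel P A T ι0 (m+1)) φ u)) t.2
      show (lift l).app (TPn P A T (m+1))
          (sem lift (terminalModel P A T ι0 (m+1)) φ)
          (T.map (TypeCat.ofHom (iotaN P A T ι0 m)) t.2) = _
      rw [show (lift l).app (TPn P A T (m+1))
          (sem lift (terminalModel P A T ι0 (m+1)) φ)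
          (T.map (TypeCat.ofHom (iotaN P A T ι0 m)) t.2)
          = (lift l).app (TPn P A T m)
              ((fun u => sem lift (terminalModel P A T ι0 (m+1)) φ u) ∘ iotaN P A T ι0 m)
              t.2 from hnat]
      show (lift l).app (TPn P A T m)
          (fun u => sem lift (terminalModel P A T ι0 (m+1)) φ (iotaN P A T ι0 m u)) t.2 = _
      have : (fun u => sem lift (terminalModel P A T ι0 (m+1)) φ (iotaN P A T ι0 m u))
          = (fun u => stepSem lift φ m u) := by
        funext u
        rw [ih (m+1) (Nat.le_succ_of_le hm) (iotaN P A T ι0 m u)]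
        exact stepSem_iotaN lift ι0 hι0 φ m hm u
      rw [this]; rfl

end Aux

/-- For every `n ∈ ℕ` and `φ ∈ L_n`: `φ` is valid in all `T`-models (`⊩ φ`)
iff `φ` is step-`n` valid (`⊩_n φ`), i.e. `‖φ‖_𝔠(s) = 1` for every `T`-model `𝔠` and
state `s` iff `‖φ‖_n(t) = 1` for every `t ∈ T_P^n 1̃`. -/
theorem valid_iff_step_valid
    {T : Type ⥤ Type} {P A Λ : Type} [FLAlgebra A]
    (lift : Λ → PredLifting T A)
    (hT : ∃ S : Type, Nonempty (T.obj S))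
    (n : ℕ) (φ : MLFormula P A Λ) (hφ : φ.rank ≤ n) :
    (∀ (M : TModel T P A) (s : M.S), sem lift M φ s = 1) ↔
      (∀ t : TPn P A T n, stepSem lift φ n t = 1) := by
  obtain ⟨S0, ⟨d⟩⟩ := hT
  set δ : T.obj (TPn P A T 0) :=
    T.map (TypeCat.ofHom (fun _ : S0 => ((fun _ : P => (1 : A)), PUnit.unit))) d with hδ
  set ι0 : TPn P A T 0 → TPn P A T 1 := fun t => (t.1, δ) with hι0def
  have hι0 : ∀ t : TPn P A T 0, (ι0 t).1 = t.1 := fun t => rfl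
  constructor
  · intro h t
    rw [← sem_terminalModel lift ι0 hι0 φ n hφ t]
    exact h (terminalModel P A T ι0 n) t
  · intro h M s
    rw [← stepSem_sigmaN lift M φ n hφ s]
    exact h (sigmaN M n s)
end

section
/- Let n > 0, let λ ∈ Λ be a 1-preserving predicate lifting, and let Γ ∪ {ψ} ⊆ L_{n−1}. If Γ ⊩_{n−1} ψ, then ◻_λΓ ⊩_n ◻_λψ, where ◻_λΓ = {◻_λγ : γ ∈ Γ}. -/
open CategoryTheory

variable {T : Type ⥤ Type} {P A Λ : Type}

/-- Let `n = m + 1 > 0`, let `λ ∈ Λ` be a 1-preserving predicate lifting,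
and let `Γ ∪ {ψ} ⊆ L_{n−1}`. If `Γ ⊩_{n−1} ψ`, then `◻_λΓ ⊩_n ◻_λψ`. -/
theorem box_preserves_stepConseq
    {T : Type ⥤ Type} {P A Λ : Type} [FLAlgebra A]
    (lift : Λ → PredLifting T A)
    (l : Λ) (hl : preservesAt (lift l) 1)
    (m : ℕ) (Γ : Set (MLFormula P A Λ)) (ψ : MLFormula P A Λ)
    (hΓ : ∀ γ ∈ Γ, MLFormula.rank γ ≤ m) (hψ : ψ.rank ≤ m)
    (h : StepConseq lift m Γ ψ) :
    StepConseq lift (m+1) (MLFormula.box l '' Γ) (MLFormula.box l ψ) := by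
  intro t ht
  have eq_one_iff : ∀ a : A, a = 1 ↔ (1:A) ≤ a := by
    intro a
    constructor
    · intro h'; exact h' ▸ le_rfl
    · intro h'
      have : a ≤ 1 := FLAlgebra.one_eq_top (A := A) ▸ le_top
      exact le_antisymm this h'
  set F : Set (TPn P A T m → A) := (fun γ => stepSem lift γ m) '' Γ with hF
  set G : Set (TPn P A T m → A) := {stepSem lift ψ m} with hG
  have hFG : famLe F G 1 := by
    intro u hu
    have hγ : ∀ γ ∈ Γ, stepSem lift γ m u = 1 := by
      intro γ hγΓ
      have := Set.mem_iInter₂.mp hu (stepSem lift γ m) ⟨γ, hγΓ, rfl⟩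
      exact (eq_one_iff _).mpr this
    have := h u hγ
    refine Set.mem_iUnion₂.mpr ⟨stepSem lift ψ m, rfl, ?_⟩
    exact (eq_one_iff _).mp this
  have hlif := hl (TPn P A T m) F G hFG
  have hmem : t.2 ∈ ⋂ f ∈ ((fun f => (lift l).app (TPn P A T m) f) '' F), alphaCut f 1 := by
    refine Set.mem_iInter₂.mpr ?_
    rintro f ⟨g, ⟨γ, hγΓ, rfl⟩, rfl⟩
    have := ht (MLFormula.box l γ) ⟨γ, hγΓ, rfl⟩
    show (1:A) ≤ (lift l).app (TPn P A T m) (stepSem lift γ m) t.2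
    exact (eq_one_iff _).mp this
  have := hlif hmem
  obtain ⟨f, hfmem, hft⟩ := Set.mem_iUnion₂.mp this
  obtain ⟨g, hgG, rfl⟩ := hfmem
  have : g = stepSem lift ψ m := hgG
  subst this
  exact (eq_one_iff _).mpr hft
end

section
/- If the general consequence relation ⊢_L is one-step complete (and Ax(𝔸) is sound and complete), then ⊢_L is complete with respect to the semantic consequence relation ⊩: for every finite Γ ∪ {φ} ⊆ ML, Γ ⊩ φ implies Γ ⊢_L φ. -/
open CategoryTheory

variable {T : Type ⥤ Type} {P A Λ : Type}

section AuxForProof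

variable {T : Type ⥤ Type} {P A Λ : Type} [FLAlgebra A]

/-- Auxiliary model whose state space is the disjoint union of all `T_P^k 1̃`. -/
noncomputable def bigModel (P A : Type) [FLAlgebra A] (T : Type ⥤ Type)
    (hT : ∃ S : Type, Nonempty (T.obj S)) : TModel T P A where
  S := Σ k : ℕ, TPn P A T k
  V := fun x => projV P A T x.1 x.2
  σ := fun x =>
    match x with
    | ⟨0, _⟩ => T.map (TypeCat.ofHom (fun _ => (⟨0, (fun _ => (1:A), PUnit.unit)⟩ : Σ k : ℕ, TPn P A T k)))
        hT.choose_spec.some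
    | ⟨k+1, t⟩ => T.map (TypeCat.ofHom (fun u => (⟨k, u⟩ : Σ k : ℕ, TPn P A T k)))
        ((t : (P → A) × T.obj (TPn P A T k)).2)

theorem bigModel_sigmaN (hT : ∃ S : Type, Nonempty (T.obj S)) :
    ∀ (k : ℕ) (t : TPn P A T k),
      sigmaN (bigModel P A T hT) k ⟨k, t⟩ = t := by
  intro k
  induction k with
  | zero => intro t; rfl
  | succ k ih =>
    intro t
    show ((TP P A T).map (TypeCat.ofHom (sigmaN (bigModel P A T hT) k))
      ((bigModel P A T hT).V ⟨k+1, t⟩, (bigModel P A T hT).σ ⟨k+1, t⟩)) = t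
    have hV : (bigModel P A T hT).V ⟨k+1, t⟩ = (t : (P → A) × T.obj (TPn P A T k)).1 := rfl
    have hσ : (bigModel P A T hT).σ ⟨k+1, t⟩ =
        T.map (TypeCat.ofHom (fun u => (⟨k, u⟩ : Σ k : ℕ, TPn P A T k)))
          ((t : (P → A) × T.obj (TPn P A T k)).2) := rfl
    show ((bigModel P A T hT).V ⟨k+1, t⟩,
        T.map (TypeCat.ofHom (sigmaN (bigModel P A T hT) k)) ((bigModel P A T hT).σ ⟨k+1, t⟩))
        = t
    rw [hV, hσ]
    have hpt : ∀ x : T.obj (TPn P A T k),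
        T.map (TypeCat.ofHom (sigmaN (bigModel P A T hT) k))
          (T.map (TypeCat.ofHom (fun u => (⟨k, u⟩ : Σ k : ℕ, TPn P A T k))) x) = x := by
      intro x
      have hid : (TypeCat.ofHom (fun u => (⟨k, u⟩ : Σ k : ℕ, TPn P A T k)) ≫
          TypeCat.ofHom (sigmaN (bigModel P A T hT) k)) = 𝟙 (TPn P A T k) := by
        ext u; exact ih u
      have h2 := FunctorToTypes.map_comp_apply T
        (TypeCat.ofHom (fun u => (⟨k, u⟩ : Σ k : ℕ, TPn P A T k)))
        (TypeCat.ofHom (sigmaN (bigModel P A T hT) k)) x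
      rw [hid, FunctorToTypes.map_id_apply] at h2
      exact h2.symm
    exact (congrArg (fun y => ((t : (P → A) × T.obj (TPn P A T k)).1, y)) (hpt _)).trans
      Prod.mk.eta

theorem sem_eq_stepSem (lift : Λ → PredLifting T A) :
    ∀ (φ : MLFormula P A Λ) (n : ℕ), φ.rank ≤ n → ∀ (M : TModel T P A) (s : M.S),
      sem lift M φ s = stepSem lift φ n (sigmaN M n s) := by
  intro φ
  induction φ with
  | const c => intro n _ M s; rfl
  | prop p => intro n _ M s; cases n <;> rfl
  | or φ ψ ihφ ihψ =>
    intro n h M s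
    simp only [MLFormula.rank, max_le_iff] at h
    show sem lift M φ s ⊔ sem lift M ψ s = _
    rw [ihφ n h.1 M s, ihψ n h.2 M s]; rfl
  | and φ ψ ihφ ihψ =>
    intro n h M s
    simp only [MLFormula.rank, max_le_iff] at h
    show sem lift M φ s ⊓ sem lift M ψ s = _
    rw [ihφ n h.1 M s, ihψ n h.2 M s]; rfl
  | conj φ ψ ihφ ihψ =>
    intro n h M s
    simp only [MLFormula.rank, max_le_iff] at h
    show sem lift M φ s * sem lift M ψ s = _
    rw [ihφ n h.1 M s, ihψ n h.2 M s]; rfl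
  | imp φ ψ ihφ ihψ =>
    intro n h M s
    simp only [MLFormula.rank, max_le_iff] at h
    show FLAlgebra.himp (sem lift M φ s) (sem lift M ψ s) = _
    rw [ihφ n h.1 M s, ihψ n h.2 M s]; rfl
  | box l φ ih =>
    intro n h M s
    simp only [MLFormula.rank] at h
    cases n with
    | zero => omega
    | succ m =>
      have hm : φ.rank ≤ m := by omega
      show (lift l).app M.S (sem lift M φ) (M.σ s) = _
      have hstep : stepSem lift (.box l φ) (m+1) (sigmaN M (m+1) s) =
          (lift l).app (TPn P A T m) (fun u => stepSem lift φ m u)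
            (T.map (TypeCat.ofHom (sigmaN M m)) (M.σ s)) := rfl
      rw [hstep]
      have := congrFun ((lift l).naturality (sigmaN M m)
        (fun u => stepSem lift φ m u)) (M.σ s)
      simp only [Function.comp] at this
      rw [this]
      congr 1
      funext u
      exact ih m hm M u

theorem semConseq_stepConseq (lift : Λ → PredLifting T A)
    (hT : ∃ S : Type, Nonempty (T.obj S))
    (Γ : Finset (MLFormula P A Λ)) (φ : MLFormula P A Λ) (n : ℕ)
    (hΓ : ∀ γ ∈ Γ, MLFormula.rank γ ≤ n) (hφ : MLFormula.rank φ ≤ n)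
    (h : SemConseq lift ↑Γ φ) : StepConseq lift n ↑Γ φ := by
  intro t ht
  have key := h (bigModel P A T hT) ⟨n, t⟩
  have hs : ∀ γ ∈ Γ, sem lift (bigModel P A T hT) γ ⟨n, t⟩ = 1 := by
    intro γ hγ
    rw [sem_eq_stepSem lift γ n (hΓ γ hγ) (bigModel P A T hT) ⟨n, t⟩,
      bigModel_sigmaN hT n t]
    exact ht γ hγ
  have := key (by intro γ hγ; exact hs γ hγ)
  rw [sem_eq_stepSem lift φ n hφ (bigModel P A T hT) ⟨n, t⟩,
    bigModel_sigmaN hT n t] at this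
  exact this

theorem stepL_genL (AxA AxL : Finset (MLFormula P A Λ) → MLFormula P A Λ → Prop)
    {n : ℕ} {Γ : Finset (MLFormula P A Λ)} {φ : MLFormula P A Λ}
    (h : StepL AxA AxL n Γ φ) : GenL AxA AxL Γ φ := by
  induction h with
  | axA _ _ h => exact GenL.axA h
  | axL ρ _ h => exact GenL.axL ρ h
  | mono l _ ih => exact GenL.mono l ih

end AuxForProof

/-- If the general consequence relation `⊢_L` is one-step complete (and
`Ax(𝔸)` is sound and complete), then `⊢_L` is complete w.r.t. the semantic consequence
relation `⊩`: for every finite `Γ ∪ {φ} ⊆ ML`, `Γ ⊩ φ` implies `Γ ⊢_L φ`. -/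
theorem genL_complete
    {T : Type ⥤ Type} {P A Λ : Type} [FLAlgebra A]
    (lift : Λ → PredLifting T A)
    (hT : ∃ S : Type, Nonempty (T.obj S))
    (AxA AxL : Finset (MLFormula P A Λ) → MLFormula P A Λ → Prop)
    (hAxL : ∀ Γ φ, AxL Γ φ →
      (∀ γ ∈ Γ, MLFormula.rank γ ≤ 1) ∧ MLFormula.rank φ ≤ 1)
    (h0sound : SoundAt lift AxA AxL 0)
    (h0complete : CompleteAt lift AxA AxL 0)
    (hone : OneStepComplete lift AxA AxL) :
    ∀ (Γ : Finset (MLFormula P A Λ)) (φ : MLFormula P A Λ),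
      SemConseq lift ↑Γ φ → GenL AxA AxL Γ φ := by
  have hcomp : ∀ n, CompleteAt lift AxA AxL n := by
    intro n
    induction n with
    | zero => exact h0complete
    | succ n ih => exact hone n ih
  intro Γ φ hsem
  set n := Γ.sup MLFormula.rank ⊔ MLFormula.rank φ with hn
  have hΓ : ∀ γ ∈ Γ, MLFormula.rank γ ≤ n := fun γ hγ =>
    le_trans (Finset.le_sup hγ) le_sup_left
  have hφ : MLFormula.rank φ ≤ n := le_sup_right
  exact stepL_genL AxA AxL
    (hcomp n Γ φ hΓ hφ (semConseq_stepConseq lift hT Γ φ n hΓ hφ hsem))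
end
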